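/- Let K be a finite simplicial complex which is d-Matoušek, and let W be a subset of the vertices of K with induced subcomplex L = {F ∈ K : F ⊆ W}. Then L is d-Matoušek. The key fact is that every facet of L is of the form W ∩ J for some facet J of K, and choosing such a J for each facet of L induces a simplicial map L' → K' which, applied coordinatewise, sends Ĥ(L) into Ĥ(K) equivariantly. -/
import Mathlib


open scoped BigOperators

noncomputable section

variable {V : Type*} [Fintype V] [DecidableEq V]

def IsComplex (K : Finset (Finset V)) : Prop :=
  ∅ ∈ K ∧ (∀ v : V, {v} ∈ K) ∧ ∀ F ∈ K, ∀ G ⊆ F, G ∈ K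

def facets (K : Finset (Finset V)) : Finset (Finset V) :=
  K.filter fun J => ∀ J' ∈ K, J ⊆ J' → J = J'

def contV (K : Finset (Finset V)) (i : V) : Finset (Finset V) :=
  (facets K).filter fun J => i ∈ J

def dual (K : Finset (Finset V)) : Finset (Finset (Finset V)) :=
  (facets K).powerset.filter fun α => (α.inf id).Nonempty

def geomFace {W : Type*} [Fintype W] (F : Finset W) : Set (W → ℝ) :=
  {x | (∀ w, 0 ≤ x w) ∧ (∑ w, x w) = 1 ∧ ∀ w, x w ≠ 0 → w ∈ F}

def geom {W : Type*} [Fintype W] (L : Finset (Finset W)) : Set (W → ℝ) :=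
  ⋃ F ∈ L, geomFace F

def supp {W : Type*} [Fintype W] [DecidableEq W] (x : W → ℝ) : Finset W :=
  Finset.univ.filter fun w => x w ≠ 0

def Faithful {d : ℕ} (K : Finset (Finset V))
    (f : (Finset V → ℝ) → EuclideanSpace ℝ (Fin d)) : Prop :=
  ∀ I : Finset V, (⋂ i ∈ I, f '' geomFace (contV K i)).Nonempty → I ∈ K

def affExt {W : Type*} [Fintype W] {E : Type*} [AddCommGroup E] [Module ℝ E]
    (p : W → E) (x : W → ℝ) : E := ∑ w, x w • p w

def Hhat (K : Finset (Finset V)) : Set ((Finset V → ℝ) × (Finset V → ℝ)) :=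
  {z | z.1 ∈ geom (dual K) ∧ z.2 ∈ geom (dual K) ∧
    ((supp z.1).inf id ∪ (supp z.2).inf id) ∉ K}

def Matousek (d : ℕ) (K : Finset (Finset V)) : Prop :=
  ∃ g : Hhat K → EuclideanSpace ℝ (Fin d),
    Continuous g ∧ (∀ z, ‖g z‖ = 1) ∧
    ∀ (x y : Finset V → ℝ) (hxy : (x, y) ∈ Hhat K) (hyx : (y, x) ∈ Hhat K),
      g ⟨(y, x), hyx⟩ = - g ⟨(x, y), hxy⟩

def Representable (d : ℕ) (K : Finset (Finset V)) : Prop :=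
  ∃ C : V → Set (EuclideanSpace ℝ (Fin d)),
    (∀ i, Convex ℝ (C i)) ∧ ∀ I : Finset V, I ∈ K ↔ (⋂ i ∈ I, C i).Nonempty

def dimOf {W : Type*} [Fintype W] [DecidableEq W] (L : Finset (Finset W)) : ℕ :=
  (L.sup Finset.card) - 1

lemma exists_facet (K : Finset (Finset V)) {F : Finset V} (hF : F ∈ K) :
    ∃ J, J ∈ facets K ∧ F ⊆ J := by
  classical
  obtain ⟨J, hJS, hmax⟩ := (K.filter fun J => F ⊆ J).exists_max_image Finset.card
    ⟨F, Finset.mem_filter.mpr ⟨hF, subset_rfl⟩⟩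
  rw [Finset.mem_filter] at hJS
  refine ⟨J, Finset.mem_filter.mpr ⟨hJS.1, fun J' hJ' hsub => ?_⟩, hJS.2⟩
  exact Finset.eq_of_subset_of_card_le hsub
    (hmax J' (Finset.mem_filter.mpr ⟨hJ', hJS.2.trans hsub⟩))

/-- induced subcomplexes of `d`-Matoušek complexes are
`d`-Matoušek. -/
theorem stmt17 {d : ℕ} (K : Finset (Finset V)) (hK : IsComplex K)
    (hM : Matousek d K) (W : Finset V) :
    Matousek d (K.filter fun F => F ⊆ W) := by
  classical
  obtain ⟨g, hgc, hgn, hga⟩ := hM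
  set L := K.filter fun F => F ⊆ W with hLdef
  -- choose a facet of K containing each face of K
  have hchoice : ∀ F : Finset V, ∃ J, F ∈ K → J ∈ facets K ∧ F ⊆ J := by
    intro F
    by_cases hF : F ∈ K
    · obtain ⟨J, hJ⟩ := exists_facet K hF; exact ⟨J, fun _ => hJ⟩
    · exact ⟨F, fun h => absurd h hF⟩
  choose φ hφ using hchoice
  -- the pushforward map
  set Φ : (Finset V → ℝ) → (Finset V → ℝ) :=
    fun x J => ∑ F ∈ Finset.univ.filter (fun F => φ F = J), x F with hΦdef
  have hΦcont : Continuous Φ :=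
    continuous_pi fun J => continuous_finset_sum _ fun F _ => continuous_apply F
  -- the key properties of Φ on geom (dual L)
  have key : ∀ x : Finset V → ℝ, x ∈ geom (dual L) →
      Φ x ∈ geom (dual K) ∧ (supp x).inf id ⊆ (supp (Φ x)).inf id ∧
        (supp x).inf id ⊆ W := by
    intro x hx
    simp only [geom, Set.mem_iUnion] at hx
    obtain ⟨α, hα, hxα⟩ := hx
    rw [dual, Finset.mem_filter, Finset.mem_powerset] at hα
    obtain ⟨hαfac, hαinf⟩ := hα
    obtain ⟨hxnn, hxsum, hxsupp⟩ := hxα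
    have hsupp : supp x ⊆ α := by
      intro F hF
      exact hxsupp F (Finset.mem_filter.mp hF).2
    have hFL : ∀ F ∈ supp x, F ∈ L := by
      intro F hF
      exact Finset.mem_of_mem_filter F (hαfac (hsupp hF))
    have hFK : ∀ F ∈ supp x, F ∈ K := fun F hF => (Finset.mem_filter.mp (hFL F hF)).1
    have hφF : ∀ F ∈ supp x, φ F ∈ facets K ∧ F ⊆ φ F := fun F hF => hφ F (hFK F hF)
    have hsne : (supp x).Nonempty := by
      by_contra hne
      rw [Finset.not_nonempty_iff_eq_empty] at hne
      have : ∀ w, x w = 0 := by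
        intro w
        by_contra hw
        have : w ∈ supp x := Finset.mem_filter.mpr ⟨Finset.mem_univ w, hw⟩
        simp [hne] at this
      simp [this] at hxsum
    -- support of Φ x
    have hsuppΦ : supp (Φ x) = (supp x).image φ := by
      ext J
      simp only [supp, Finset.mem_filter, Finset.mem_univ, true_and, Finset.mem_image,
        hΦdef]
      constructor
      · intro hne
        by_contra hcon
        push_neg at hcon
        apply hne
        apply Finset.sum_eq_zero
        intro F hF
        rw [Finset.mem_filter] at hF
        by_contra hxF
        exact hcon F hxF hF.2
      · rintro ⟨F, hFne, rfl⟩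
        have hpos : 0 < x F := lt_of_le_of_ne (hxnn F) (Ne.symm hFne)
        have hle : x F ≤ ∑ G ∈ Finset.univ.filter (fun G => φ G = φ F), x G :=
          Finset.single_le_sum (fun G _ => hxnn G)
            (Finset.mem_filter.mpr ⟨Finset.mem_univ F, rfl⟩)
        exact ne_of_gt (lt_of_lt_of_le hpos hle)
    have himg : (supp x).image φ ∈ dual K := by
      rw [dual, Finset.mem_filter, Finset.mem_powerset]
      constructor
      · intro J hJ
        obtain ⟨F, hF, rfl⟩ := Finset.mem_image.mp hJ
        exact (hφF F hF).1
      · obtain ⟨v, hv⟩ := hαinf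
        refine ⟨v, ?_⟩
        have : ({v} : Finset V) ≤ ((supp x).image φ).inf id := by
          apply Finset.le_inf
          intro J hJ
          obtain ⟨F, hF, rfl⟩ := Finset.mem_image.mp hJ
          have h1 : α.inf id ≤ F := Finset.inf_le (hsupp hF)
          have h2 : v ∈ F := h1 hv
          exact Finset.singleton_subset_iff.mpr ((hφF F hF).2 h2)
        exact this (Finset.mem_singleton_self v)
    refine ⟨?_, ?_, ?_⟩
    · -- Φ x ∈ geom (dual K)
      simp only [geom, Set.mem_iUnion]
      refine ⟨(supp x).image φ, himg, ?_, ?_, ?_⟩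
      · intro J
        exact Finset.sum_nonneg fun F _ => hxnn F
      · rw [show (∑ J, Φ x J) = ∑ F, x F from Finset.sum_fiberwise _ _ _]
        exact hxsum
      · intro J hJ
        rw [← hsuppΦ]
        exact Finset.mem_filter.mpr ⟨Finset.mem_univ J, hJ⟩
    · -- inf mono
      rw [hsuppΦ, Finset.inf_image]
      calc (supp x).inf id ≤ (supp x).inf φ := by
            apply Finset.inf_mono_fun
            intro F hF
            exact (hφF F hF).2
        _ = (supp x).inf (id ∘ φ) := rfl
    · -- inf ⊆ W
      obtain ⟨F₀, hF₀⟩ := hsne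
      have h1 : (supp x).inf id ≤ F₀ := Finset.inf_le hF₀
      have h2 : F₀ ⊆ W := (Finset.mem_filter.mp (hFL F₀ hF₀)).2
      exact h1.trans h2
  -- the induced map on Hhat
  have hmap : ∀ z : (Finset V → ℝ) × (Finset V → ℝ), z ∈ Hhat L →
      (Φ z.1, Φ z.2) ∈ Hhat K := by
    rintro ⟨x, y⟩ ⟨hx, hy, hnot⟩
    obtain ⟨hx1, hx2, hx3⟩ := key x hx
    obtain ⟨hy1, hy2, hy3⟩ := key y hy
    refine ⟨hx1, hy1, fun hA => hnot ?_⟩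
    have hBA : (supp x).inf id ∪ (supp y).inf id ⊆
        (supp (Φ x)).inf id ∪ (supp (Φ y)).inf id :=
      Finset.union_subset_union hx2 hy2
    have hBK : (supp x).inf id ∪ (supp y).inf id ∈ K := hK.2.2 _ hA _ hBA
    exact Finset.mem_filter.mpr ⟨hBK, Finset.union_subset hx3 hy3⟩
  refine ⟨fun z => g ⟨(Φ z.1.1, Φ z.1.2), hmap z.1 z.2⟩, ?_, ?_, ?_⟩
  · apply hgc.comp
    apply Continuous.subtype_mk
    exact (hΦcont.comp (continuous_fst.comp continuous_subtype_val)).prodMk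
      (hΦcont.comp (continuous_snd.comp continuous_subtype_val))
  · intro z
    exact hgn _
  · intro x y hxy hyx
    exact hga (Φ x) (Φ y) (hmap (x, y) hxy) (hmap (y, x) hyx)
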